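/- For a deterministic MDP with discount γ ∈ (0,1) and potential Φ, along any infinite trajectory (s⁰, a⁰, s¹, a¹, …) the shaped discounted return equals the original discounted return minus Φ(s⁰): ∑ₜ γᵗ·(R(sᵗ,aᵗ) + γΦ(sᵗ⁺¹) - Φ(sᵗ)) = ∑ₜ γᵗ·R(sᵗ,aᵗ) - Φ(s⁰), provided both series converge absolutely (e.g., R and Φ bounded). -/
import Mathlib


theorem shaped_return_telescopes
    {S A : Type*} (T : S → A → S) (R : S → A → ℝ) (Φ : S → ℝ)
    (γ : ℝ) (hγ : γ ∈ Set.Ioo (0:ℝ) 1)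
    (s : ℕ → S) (a : ℕ → A)
    (htraj : ∀ t, s (t + 1) = T (s t) (a t))
    (C : ℝ) (hR : ∀ x y, |R x y| ≤ C) (hΦ : ∀ x, |Φ x| ≤ C) :
    ∑' t : ℕ, γ ^ t * (R (s t) (a t) + γ * Φ (s (t + 1)) - Φ (s t))
      = (∑' t : ℕ, γ ^ t * R (s t) (a t)) - Φ (s 0) := by
  obtain ⟨hγ0, hγ1⟩ := hγ
  have hγabs : |γ| < 1 := by rw [abs_of_pos hγ0]; exact hγ1
  have hgeo : Summable (fun t : ℕ => C * γ ^ t) :=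
    (summable_geometric_of_lt_one hγ0.le hγ1).mul_left C
  have key : ∀ (f : ℕ → ℝ), (∀ t, |f t| ≤ C) →
      Summable (fun t : ℕ => γ ^ t * f t) := by
    intro f hf
    apply Summable.of_abs
    apply hgeo.of_nonneg_of_le (fun t => abs_nonneg _)
    intro t
    rw [abs_mul, abs_pow, abs_of_pos hγ0, mul_comm]
    exact mul_le_mul_of_nonneg_right (hf t) (pow_nonneg hγ0.le t)
  set g : ℕ → ℝ := fun t => γ ^ t * Φ (s t) with hg
  have hsumR : Summable (fun t : ℕ => γ ^ t * R (s t) (a t)) :=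
    key _ (fun t => hR _ _)
  have hsumg : Summable g := key _ (fun t => hΦ _)
  have hsumg' : Summable (fun t => g (t + 1)) := by
    exact (summable_nat_add_iff 1).mpr hsumg
  have htel : Summable (fun t => g (t + 1) - g t) := hsumg'.sub hsumg
  have hg0 : Filter.Tendsto g Filter.atTop (nhds 0) := by
    have h1 : Filter.Tendsto (fun t : ℕ => C * γ ^ t) Filter.atTop (nhds 0) := by
      simpa using (tendsto_pow_atTop_nhds_zero_of_lt_one hγ0.le hγ1).const_mul C
    have h2 : Filter.Tendsto (fun t : ℕ => -(C * γ ^ t)) Filter.atTop (nhds 0) := by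
      simpa using h1.neg
    refine tendsto_of_tendsto_of_tendsto_of_le_of_le h2 h1 (fun t => ?_) (fun t => ?_)
    · have := abs_le.mp (hΦ (s t))
      have : -C ≤ Φ (s t) := this.1
      have hp : (0:ℝ) ≤ γ ^ t := pow_nonneg hγ0.le t
      simp only [hg, neg_mul]
      nlinarith
    · have h := (abs_le.mp (hΦ (s t))).2
      have hp : (0:ℝ) ≤ γ ^ t := pow_nonneg hγ0.le t
      simp only [hg]
      nlinarith
  have hteltsum : ∑' t, (g (t + 1) - g t) = -g 0 := by
    have : HasSum (fun t => g (t + 1) - g t) (-g 0) := by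
      rw [htel.hasSum_iff_tendsto_nat]
      have : ∀ n, ∑ i ∈ Finset.range n, (g (i + 1) - g i) = g n - g 0 :=
        fun n => Finset.sum_range_sub g n
      simp only [this]
      simpa using hg0.sub (tendsto_const_nhds (x := g 0))
    exact this.tsum_eq
  have heq : ∀ t, γ ^ t * (R (s t) (a t) + γ * Φ (s (t + 1)) - Φ (s t))
      = γ ^ t * R (s t) (a t) + (g (t + 1) - g t) := by
    intro t
    simp only [hg, pow_succ]
    ring
  calc ∑' t : ℕ, γ ^ t * (R (s t) (a t) + γ * Φ (s (t + 1)) - Φ (s t))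
      = ∑' t : ℕ, (γ ^ t * R (s t) (a t) + (g (t + 1) - g t)) := by
        exact tsum_congr heq
    _ = (∑' t : ℕ, γ ^ t * R (s t) (a t)) + ∑' t, (g (t + 1) - g t) :=
        Summable.tsum_add hsumR htel
    _ = (∑' t : ℕ, γ ^ t * R (s t) (a t)) - Φ (s 0) := by
        rw [hteltsum]; simp [hg]; ring
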